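/- Let x₁, x₂, x₃, x₄ denote the images of the four free generators in the free Burnside group B(4,3), and for i ∈ {1,2,3,4} let Q_i = x₁x₂⁻¹x₃x₄⁻¹ · x₁⁻¹x₂x₃⁻¹x₄ · x_i · x₄x₃⁻¹x₂x₁⁻¹ · x₄⁻¹x₃x₂⁻¹x₁. Then the quotient of B(4,3) by the normal closure of {Q_i x_i⁻¹ : i = 1,2,3,4} is not isomorphic to the free Burnside group B(k,3) for any natural number k. -/

import Mathlib

/-- The free Burnside group `B(r, n)`: the quotient of the free group on `r` generators
by the normal closure of the set of all `n`-th powers. -/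
abbrev FreeBurnsideGroup (r n : ℕ) : Type :=
  FreeGroup (Fin r) ⧸
    Subgroup.normalClosure {x : FreeGroup (Fin r) | ∃ w : FreeGroup (Fin r), x = w ^ n}

/-- The image of the `i`-th free generator in `B(4,3)`. -/
def burnsideGen (i : Fin 4) : FreeBurnsideGroup 4 3 :=
  QuotientGroup.mk (FreeGroup.of i)

/-- The element `Q_i = x₁x₂⁻¹x₃x₄⁻¹ · x₁⁻¹x₂x₃⁻¹x₄ · x_i · x₄x₃⁻¹x₂x₁⁻¹ · x₄⁻¹x₃x₂⁻¹x₁`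
of `B(4,3)` (here the generators are indexed `x₁ = burnsideGen 0, …, x₄ = burnsideGen 3`). -/
def wordQ (i : Fin 4) : FreeBurnsideGroup 4 3 :=
  let x₁ := burnsideGen 0
  let x₂ := burnsideGen 1
  let x₃ := burnsideGen 2
  let x₄ := burnsideGen 3
  x₁ * x₂⁻¹ * x₃ * x₄⁻¹ * x₁⁻¹ * x₂ * x₃⁻¹ * x₄ * burnsideGen i *
    x₄ * x₃⁻¹ * x₂ * x₁⁻¹ * x₄⁻¹ * x₃ * x₂⁻¹ * x₁

/-- The quotient of `B(4,3)` by the normal closure of `{Q_i x_i⁻¹ : i = 1,…,4}`: the third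
Burnside group of the closure of the 5-braid `Δ₅⁴ = (σ₁σ₂σ₃σ₄)¹⁰`. -/
abbrev BurnsideDelta : Type :=
  FreeBurnsideGroup 4 3 ⧸
    Subgroup.normalClosure {g : FreeBurnsideGroup 4 3 |
      ∃ i : Fin 4, g = wordQ i * (burnsideGen i)⁻¹}


/-- A concrete model of the free Burnside group `B(3,3)`: exponent 3, nilpotency class 3,
order 3^7, with multiplication given by explicit polynomials over `ZMod 3`. -/
@[ext] structure GG where
  a1 : ZMod 3
  a2 : ZMod 3
  a3 : ZMod 3
  b21 : ZMod 3
  b31 : ZMod 3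
  b32 : ZMod 3
  d : ZMod 3
deriving DecidableEq


instance : Fintype GG :=
  Fintype.ofEquiv (ZMod 3 × ZMod 3 × ZMod 3 × ZMod 3 × ZMod 3 × ZMod 3 × ZMod 3)
    { toFun := fun p => ⟨p.1, p.2.1, p.2.2.1, p.2.2.2.1, p.2.2.2.2.1, p.2.2.2.2.2.1, p.2.2.2.2.2.2⟩
      invFun := fun g => ⟨g.a1, g.a2, g.a3, g.b21, g.b31, g.b32, g.d⟩
      left_inv := fun _ => rfl
      right_inv := fun _ => rfl }

namespace GG

instance : Mul GG :=
  ⟨fun g h =>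
    ⟨g.a1 + h.a1, g.a2 + h.a2, g.a3 + h.a3,
     g.b21 + h.b21 + g.a2 * h.a1,
     g.b31 + h.b31 + g.a3 * h.a1,
     g.b32 + h.b32 + g.a3 * h.a2,
     g.d + h.d + g.b32 * h.a1 - g.b31 * h.a2 + g.b21 * h.a3
       - g.a3 * h.a1 * h.a2 + g.a2 * h.a1 * h.a3 + g.a2 * g.a3 * h.a1⟩⟩

instance : One GG := ⟨⟨0, 0, 0, 0, 0, 0, 0⟩⟩

instance : Inv GG :=
  ⟨fun g =>
    ⟨-g.a1, -g.a2, -g.a3,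
     -g.b21 + g.a1 * g.a2, -g.b31 + g.a1 * g.a3, -g.b32 + g.a2 * g.a3,
     -g.d + g.a3 * g.b21 - g.a2 * g.b31 + g.a1 * g.b32 + g.a1 * g.a2 * g.a3⟩⟩

@[simp] lemma mul_a1 (g h : GG) : (g * h).a1 = g.a1 + h.a1 := rfl
@[simp] lemma mul_a2 (g h : GG) : (g * h).a2 = g.a2 + h.a2 := rfl
@[simp] lemma mul_a3 (g h : GG) : (g * h).a3 = g.a3 + h.a3 := rfl
@[simp] lemma mul_b21 (g h : GG) : (g * h).b21 = g.b21 + h.b21 + g.a2 * h.a1 := rfl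
@[simp] lemma mul_b31 (g h : GG) : (g * h).b31 = g.b31 + h.b31 + g.a3 * h.a1 := rfl
@[simp] lemma mul_b32 (g h : GG) : (g * h).b32 = g.b32 + h.b32 + g.a3 * h.a2 := rfl
@[simp] lemma mul_d (g h : GG) :
    (g * h).d = g.d + h.d + g.b32 * h.a1 - g.b31 * h.a2 + g.b21 * h.a3
      - g.a3 * h.a1 * h.a2 + g.a2 * h.a1 * h.a3 + g.a2 * g.a3 * h.a1 := rfl
@[simp] lemma one_a1 : (1 : GG).a1 = 0 := rfl
@[simp] lemma one_a2 : (1 : GG).a2 = 0 := rfl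
@[simp] lemma one_a3 : (1 : GG).a3 = 0 := rfl
@[simp] lemma one_b21 : (1 : GG).b21 = 0 := rfl
@[simp] lemma one_b31 : (1 : GG).b31 = 0 := rfl
@[simp] lemma one_b32 : (1 : GG).b32 = 0 := rfl
@[simp] lemma one_d : (1 : GG).d = 0 := rfl
@[simp] lemma inv_a1 (g : GG) : g⁻¹.a1 = -g.a1 := rfl
@[simp] lemma inv_a2 (g : GG) : g⁻¹.a2 = -g.a2 := rfl
@[simp] lemma inv_a3 (g : GG) : g⁻¹.a3 = -g.a3 := rfl
@[simp] lemma inv_b21 (g : GG) : g⁻¹.b21 = -g.b21 + g.a1 * g.a2 := rfl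
@[simp] lemma inv_b31 (g : GG) : g⁻¹.b31 = -g.b31 + g.a1 * g.a3 := rfl
@[simp] lemma inv_b32 (g : GG) : g⁻¹.b32 = -g.b32 + g.a2 * g.a3 := rfl
@[simp] lemma inv_d (g : GG) :
    g⁻¹.d = -g.d + g.a3 * g.b21 - g.a2 * g.b31 + g.a1 * g.b32 + g.a1 * g.a2 * g.a3 := rfl

lemma three_eq_zero : (3 : ZMod 3) = 0 := by decide

instance : Group GG where
  mul_assoc g h k := by
    have h3 := three_eq_zero
    ext <;> simp only [mul_a1, mul_a2, mul_a3, mul_b21, mul_b31, mul_b32, mul_d]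
    · ring
    · ring
    · ring
    · ring
    · ring
    · ring
    · linear_combination (g.a3 * h.a2 * k.a1) * h3
  one_mul g := by
    ext <;> simp
  mul_one g := by
    ext <;> simp
  inv_mul_cancel g := by
    have h3 := three_eq_zero
    ext <;> simp only [mul_a1, mul_a2, mul_a3, mul_b21, mul_b31, mul_b32, mul_d,
      inv_a1, inv_a2, inv_a3, inv_b21, inv_b31, inv_b32, inv_d,
      one_a1, one_a2, one_a3, one_b21, one_b31, one_b32, one_d]
    · ring
    · ring
    · ring
    · ring
    · ring
    · ring
    · linear_combination (g.a1 * g.a2 * g.a3) * h3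

lemma cube (g : GG) : g ^ 3 = 1 := by
  have h3 := three_eq_zero
  have : g ^ 3 = g * g * g := by rw [pow_succ, pow_succ, pow_one]
  rw [this]
  ext <;> simp only [mul_a1, mul_a2, mul_a3, mul_b21, mul_b31, mul_b32, mul_d,
    one_a1, one_a2, one_a3, one_b21, one_b31, one_b32, one_d]
  · linear_combination g.a1 * h3
  · linear_combination g.a2 * h3
  · linear_combination g.a3 * h3
  · linear_combination (g.b21 + g.a1 * g.a2) * h3
  · linear_combination (g.b31 + g.a1 * g.a3) * h3
  · linear_combination (g.b32 + g.a2 * g.a3) * h3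
  · linear_combination (g.d + g.a1 * g.b32 - g.a2 * g.b31 + g.a3 * g.b21 + 2 * g.a1 * g.a2 * g.a3) * h3

end GG
section Hom
variable {G : Type} [Group G]

/-- The value of the word `Q_i` on a 4-tuple of elements of `G`. -/
def relWord (f : Fin 4 → G) (i : Fin 4) : G :=
  f 0 * (f 1)⁻¹ * f 2 * (f 3)⁻¹ * (f 0)⁻¹ * f 1 * (f 2)⁻¹ * f 3 * f i *
    f 3 * (f 2)⁻¹ * f 1 * (f 0)⁻¹ * (f 3)⁻¹ * f 2 * (f 1)⁻¹ * f 0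

/-- Lift a map on generators to a hom from the free Burnside group, provided the
target has exponent dividing 3. -/
def fbLift (hG : ∀ g : G, g ^ 3 = 1) {r : ℕ} (f : Fin r → G) : FreeBurnsideGroup r 3 →* G :=
  QuotientGroup.lift _ (FreeGroup.lift f) (fun x hx => by
    have hker : x ∈ (FreeGroup.lift f).ker :=
      Subgroup.normalClosure_le_normal
        (by rintro y ⟨w, rfl⟩; simp [MonoidHom.mem_ker, map_pow, hG]) hx
    simpa [MonoidHom.mem_ker] using hker)

@[simp] lemma fbLift_gen (hG : ∀ g : G, g ^ 3 = 1) {r : ℕ} (f : Fin r → G) (i : Fin r) :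
    fbLift hG f (QuotientGroup.mk (FreeGroup.of i)) = f i := by
  simp [fbLift]

lemma fb_hom_ext {r : ℕ} {φ ψ : FreeBurnsideGroup r 3 →* G}
    (h : ∀ i, φ (QuotientGroup.mk (FreeGroup.of i)) = ψ (QuotientGroup.mk (FreeGroup.of i))) :
    φ = ψ :=
  QuotientGroup.monoidHom_ext _ (FreeGroup.ext_hom _ _ (fun i => by simpa using h i))

/-- Homs from `B(r,3)` to an exponent-3 group correspond to `r`-tuples. -/
def fbEquiv (hG : ∀ g : G, g ^ 3 = 1) (r : ℕ) :
    (FreeBurnsideGroup r 3 →* G) ≃ (Fin r → G) where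
  toFun φ i := φ (QuotientGroup.mk (FreeGroup.of i))
  invFun := fbLift hG
  left_inv φ := fb_hom_ext fun i => by simp
  right_inv f := funext fun i => by simp

lemma map_wordQ (ψ : FreeBurnsideGroup 4 3 →* G) (i : Fin 4) :
    ψ (wordQ i) = relWord (fun j => ψ (burnsideGen j)) i := by
  simp [wordQ, relWord, map_mul, map_inv]

lemma bd_hom_ext {φ ψ : BurnsideDelta →* G}
    (h : ∀ i, φ (QuotientGroup.mk (burnsideGen i)) = ψ (QuotientGroup.mk (burnsideGen i))) :
    φ = ψ :=
  QuotientGroup.monoidHom_ext _ (fb_hom_ext fun i => by exact h i)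

/-- Homs from `BurnsideDelta` to an exponent-3 group correspond to 4-tuples
satisfying the relations `Q_i = x_i`. -/
def bdEquiv (hG : ∀ g : G, g ^ 3 = 1) :
    (BurnsideDelta →* G) ≃ {f : Fin 4 → G // ∀ i, relWord f i = f i} where
  toFun φ :=
    ⟨fun i => φ (QuotientGroup.mk (burnsideGen i)), fun i => by
      have h1 : (QuotientGroup.mk (wordQ i * (burnsideGen i)⁻¹) : BurnsideDelta) = 1 :=
        (QuotientGroup.eq_one_iff _).2 (Subgroup.subset_normalClosure ⟨i, rfl⟩)
      have h2 : (QuotientGroup.mk (wordQ i) : BurnsideDelta)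
          = QuotientGroup.mk (burnsideGen i) := by
        rw [← mul_inv_eq_one]
        simpa using h1
      have h3 := map_wordQ (φ.comp (QuotientGroup.mk' _)) i
      simpa [QuotientGroup.mk'_apply, h2] using h3.symm⟩
  invFun f :=
    QuotientGroup.lift _ (fbLift hG f.1) (fun x hx => by
      have hb : (fun j => (fbLift hG f.1) (burnsideGen j)) = f.1 :=
        funext fun j => by simp [burnsideGen]
      have hker : x ∈ (fbLift hG f.1).ker :=
        Subgroup.normalClosure_le_normal
          (by
            rintro y ⟨i, rfl⟩
            simp [MonoidHom.mem_ker, map_mul, map_inv, map_wordQ, hb, f.2 i, burnsideGen]) hx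
      simpa [MonoidHom.mem_ker] using hker)
  left_inv φ := bd_hom_ext fun i => by
    show fbLift hG (fun j => φ (QuotientGroup.mk (burnsideGen j))) (burnsideGen i)
        = φ (QuotientGroup.mk (burnsideGen i))
    simp [burnsideGen]
  right_inv f := Subtype.ext <| funext fun i => by
    show fbLift hG f.1 (burnsideGen i) = f.1 i
    simp [burnsideGen]

/-- Transport hom-counting along a group isomorphism. -/
def homCongr {A B : Type} [Group A] [Group B] (e : A ≃* B) : (A →* G) ≃ (B →* G) where
  toFun φ := φ.comp e.symm.toMonoidHom
  invFun φ := φ.comp e.toMonoidHom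
  left_inv φ := by ext x; simp
  right_inv φ := by ext x; simp

end Hom

def witF : Fin 4 → GG :=
  ![⟨1, 0, 0, 0, 0, 0, 0⟩, ⟨0, 1, 0, 0, 0, 0, 0⟩, ⟨0, 0, 1, 0, 0, 0, 0⟩, 1]

set_option maxRecDepth 4000 in
lemma witF_not_rel : ¬ ∀ i, relWord witF i = witF i := by decide

set_option maxRecDepth 10000

/-- The quotient of `B(4,3)` by the relations `Q_i x_i⁻¹` is not isomorphic to any free
Burnside group `B(k,3)`; hence the closure of `Δ₅⁴` is not 3-move reducible to a trivial
link, disproving the Montesinos–Nakanishi conjecture. -/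
theorem burnsideDelta_not_iso_freeBurnside :
    ∀ k : ℕ, IsEmpty (BurnsideDelta ≃* FreeBurnsideGroup k 3) := by
  intro k
  constructor
  intro e
  -- Step 1: counting homs into `Multiplicative (ZMod 3)` forces `k = 4`.
  have hM : ∀ g : Multiplicative (ZMod 3), g ^ 3 = 1 := by decide
  have hrel : ∀ f : Fin 4 → Multiplicative (ZMod 3), ∀ i, relWord f i = f i := by decide
  have cM : Nat.card {f : Fin 4 → Multiplicative (ZMod 3) // ∀ i, relWord f i = f i}
      = Nat.card (Fin k → Multiplicative (ZMod 3)) :=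
    (Nat.card_congr (bdEquiv hM).symm).trans
      ((Nat.card_congr (homCongr e)).trans (Nat.card_congr (fbEquiv hM k)))
  have h1 : Nat.card {f : Fin 4 → Multiplicative (ZMod 3) // ∀ i, relWord f i = f i}
      = 3 ^ 4 := by
    rw [Nat.card_congr (Equiv.subtypeUnivEquiv fun f => hrel f)]
    simp [Nat.card_eq_fintype_card, Fintype.card_fun]
  have h2 : Nat.card (Fin k → Multiplicative (ZMod 3)) = 3 ^ k := by
    simp [Nat.card_eq_fintype_card, Fintype.card_fun]
  have hk : k = 4 := by
    have : (3 : ℕ) ^ 4 = 3 ^ k := by rw [← h1, ← h2, cM]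
    exact (Nat.pow_right_injective (by norm_num) this).symm
  subst hk
  -- Step 2: counting homs into the exponent-3 class-3 group `GG` gives a contradiction.
  have cG : Nat.card {f : Fin 4 → GG // ∀ i, relWord f i = f i}
      = Nat.card (Fin 4 → GG) :=
    (Nat.card_congr (bdEquiv GG.cube).symm).trans
      ((Nat.card_congr (homCongr e)).trans (Nat.card_congr (fbEquiv GG.cube 4)))
  have hlt : Nat.card {f : Fin 4 → GG // ∀ i, relWord f i = f i}
      < Nat.card (Fin 4 → GG) := by
    rw [Nat.card_eq_fintype_card, Nat.card_eq_fintype_card]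
    exact Fintype.card_subtype_lt (x := witF) witF_not_rel
  exact absurd cG hlt.ne
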